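/- For the problem min ωT + (1−ω)Σ_i Σ_j p_{ij}τ_i subject to τ_i/x_i + C_{ij}d_{ij}/f_{ij} ≤ T, Σ_{i,j} f_{ij} ≤ F, τ_i ≥ T_i, f_{ij} ≥ 0, T ≥ T̄ (with fixed d, x, p), the optimal solution is τ_i* = T_i, f_{ij}* = C_{ij}d_{ij}x_i/(T*·x_i − T_i), and T* = max{T̄, T̃}, where T̃ solves Σ_{i,j} C_{ij}d_{ij}x_i/(T̃x_i − T_i) = F. -/

import Mathlib

open Finset

/-- Closed-form optimum of the subproblem min ωT + (1−ω)Σ_{ij} p_{ij}τ_i subject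
to τ_i/x_i + C_{ij}d_{ij}/f_{ij} ≤ T, Σ f ≤ F, τ_i ≥ T_i, f ≥ 0, T ≥ T̄ (for
fixed d, x, p): the optimum is τ_i* = T_i, f_{ij}* = C_{ij}d_{ij}x_i/(T*x_i − T_i),
T* = max{T̄, T̃}, where T̃ solves Σ_{ij} C_{ij}d_{ij}x_i/(T̃x_i − T_i) = F.
The constraint τ_i/x_i + C_{ij}d_{ij}/f_{ij} ≤ T is written in the equivalent
product form C_{ij}d_{ij} ≤ (T − τ_i/x_i)·f_{ij} (valid for f_{ij} ≥ 0). -/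
theorem stmt_15 (N : ℕ) (M : Fin N → ℕ) (ω : ℝ) (hω0 : 0 < ω) (hω1 : ω ≤ 1)
    (p C d : (Σ i : Fin N, Fin (M i)) → ℝ) (x Tlow : Fin N → ℝ)
    (Tbar F Tt : ℝ) (hp : ∀ k, 0 ≤ p k) (hC : ∀ k, 0 < C k) (hd : ∀ k, 0 < d k)
    (hx : ∀ i, 0 < x i) (hTlow : ∀ i, 0 < Tlow i) (hF : 0 < F)
    (hTt : ∀ i, Tlow i < Tt * x i)
    (hTteq : ∑ k : Σ i : Fin N, Fin (M i),
      C k * d k * x k.1 / (Tt * x k.1 - Tlow k.1) = F) :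
    let Tstar : ℝ := max Tbar Tt
    let fstar : (Σ i : Fin N, Fin (M i)) → ℝ :=
      fun k => C k * d k * x k.1 / (Tstar * x k.1 - Tlow k.1)
    -- (τ*, f*, T*) is feasible
    ((∀ k : Σ i : Fin N, Fin (M i),
        C k * d k ≤ (Tstar - Tlow k.1 / x k.1) * fstar k) ∧
      (∑ k, fstar k ≤ F) ∧ (∀ k, 0 ≤ fstar k) ∧ Tbar ≤ Tstar) ∧
    -- and optimal
    (∀ (τ : Fin N → ℝ) (f : (Σ i : Fin N, Fin (M i)) → ℝ) (T : ℝ),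
      (∀ k : Σ i : Fin N, Fin (M i), C k * d k ≤ (T - τ k.1 / x k.1) * f k) →
      (∑ k, f k ≤ F) → (∀ i, Tlow i ≤ τ i) → (∀ k, 0 ≤ f k) → Tbar ≤ T →
      ω * Tstar + (1 - ω) * ∑ k : Σ i : Fin N, Fin (M i), p k * Tlow k.1 ≤
        ω * T + (1 - ω) * ∑ k : Σ i : Fin N, Fin (M i), p k * τ k.1) := by
  intro Tstar fstar
  have hTsTt : Tt ≤ Tstar := le_max_right _ _
  have hdenTt : ∀ k : Σ i : Fin N, Fin (M i), 0 < Tt * x k.1 - Tlow k.1 :=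
    fun k => sub_pos.2 (hTt k.1)
  have hden : ∀ k : Σ i : Fin N, Fin (M i), 0 < Tstar * x k.1 - Tlow k.1 := by
    intro k
    have h1 := hdenTt k
    have h2 := hx k.1
    nlinarith
  have hnum : ∀ k : Σ i : Fin N, Fin (M i), 0 < C k * d k * x k.1 := by
    intro k; have := hC k; have := hd k; have := hx k.1; positivity
  constructor
  · refine ⟨?_, ?_, ?_, le_max_left _ _⟩
    · intro k
      have hx' := (hx k.1).ne'
      have hd' := (hden k).ne'
      have : (Tstar - Tlow k.1 / x k.1) * fstar k = C k * d k := by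
        show (Tstar - Tlow k.1 / x k.1) *
          (C k * d k * x k.1 / (Tstar * x k.1 - Tlow k.1)) = C k * d k
        field_simp
      rw [this]
    · rw [← hTteq]
      apply Finset.sum_le_sum
      intro k _
      exact div_le_div_of_nonneg_left (le_of_lt (hnum k)) (hdenTt k)
        (by nlinarith [hx k.1])
    · intro k
      exact le_of_lt (div_pos (hnum k) (hden k))
  · intro τ f T hcon hsum hτ hf hT
    have hTtT : Tt ≤ T := by
      by_contra hlt
      push_neg at hlt
      rcases isEmpty_or_nonempty (Σ i : Fin N, Fin (M i)) with h | h
      · rw [Finset.univ_eq_empty, Finset.sum_empty] at hTteq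
        linarith
      · have hfk : ∀ k : Σ i : Fin N, Fin (M i),
            C k * d k * x k.1 / (Tt * x k.1 - Tlow k.1) < f k := by
          intro k
          have h1 := hcon k
          have h2 := hf k
          have h3 := hτ k.1
          have hxk := hx k.1
          have hCd : 0 < C k * d k := mul_pos (hC k) (hd k)
          have hfpos : 0 < f k := by
            rcases h2.lt_or_eq with h | h
            · exact h
            · exfalso; rw [← h, mul_zero] at h1; linarith
          have hTτ : 0 < T - τ k.1 / x k.1 := by
            by_contra hle
            push_neg at hle
            nlinarith
          -- T*x - Tlow > 0
          have hTx : 0 < T * x k.1 - Tlow k.1 := by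
            have : Tlow k.1 / x k.1 ≤ τ k.1 / x k.1 := by gcongr
            have : Tlow k.1 / x k.1 < T := by linarith
            have := (div_lt_iff₀ hxk).mp this
            linarith
          rw [div_lt_iff₀ (hdenTt k)]
          have hstep : C k * d k * x k.1 ≤ f k * (T * x k.1 - Tlow k.1) := by
            have h4 : C k * d k ≤ (T - Tlow k.1 / x k.1) * f k := by
              have : (T - τ k.1 / x k.1) * f k ≤ (T - Tlow k.1 / x k.1) * f k := by
                apply mul_le_mul_of_nonneg_right _ h2
                have : Tlow k.1 / x k.1 ≤ τ k.1 / x k.1 := by gcongr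
                linarith
              linarith
            have hx' := hxk.ne'
            have := mul_le_mul_of_nonneg_right h4 (le_of_lt hxk)
            calc C k * d k * x k.1 ≤ (T - Tlow k.1 / x k.1) * f k * x k.1 := this
              _ = f k * (T * x k.1 - Tlow k.1) := by field_simp
          have : f k * (T * x k.1 - Tlow k.1) < f k * (Tt * x k.1 - Tlow k.1) := by
            apply mul_lt_mul_of_pos_left _ hfpos
            nlinarith
          linarith
        have := Finset.sum_lt_sum_of_nonempty Finset.univ_nonempty
          (fun k _ => hfk k)
        rw [hTteq] at this
        linarith
    have hTsT : Tstar ≤ T := max_le hT hTtT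
    have hsump : ∑ k : Σ i : Fin N, Fin (M i), p k * Tlow k.1 ≤
        ∑ k : Σ i : Fin N, Fin (M i), p k * τ k.1 := by
      apply Finset.sum_le_sum
      intro k _
      exact mul_le_mul_of_nonneg_left (hτ k.1) (hp k)
    have h1 : ω * Tstar ≤ ω * T := mul_le_mul_of_nonneg_left hTsT (le_of_lt hω0)
    have h2 : (1 - ω) * (∑ k : Σ i : Fin N, Fin (M i), p k * Tlow k.1) ≤
        (1 - ω) * (∑ k : Σ i : Fin N, Fin (M i), p k * τ k.1) :=
      mul_le_mul_of_nonneg_left hsump (by linarith)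
    linarith
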